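/- Let σ_1, σ_2 : ℝ^N → (0,∞] be screening functions with 0 < inf_{ℝ^N} σ_i ≤ sup_{ℝ^N} σ_i < ∞ for i = 1, 2. Then for every 0 < s < 1 and 1 ≤ p < ∞ there exist constants c_0, c_1 > 0 (depending on s, p, N, σ_1, σ_2) such that c_0 |f|_{W̃^{s,p}_{(σ_2)}(ℝ^N)} ≤ |f|_{W̃^{s,p}_{(σ_1)}(ℝ^N)} ≤ c_1 |f|_{W̃^{s,p}_{(σ_2)}(ℝ^N)} for all f ∈ L¹_loc(ℝ^N); in particular W̃^{s,p}_{(σ_1)}(ℝ^N) = W̃^{s,p}_{(σ_2)}(ℝ^N) as sets. -/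

import Mathlib

open MeasureTheory Metric
open scoped ENNReal

namespace St13

open Set


set_option maxHeartbeats 1000000

lemma rpow_add_le {p : ℝ} (hp : 1 ≤ p) (a b : ℝ) :
    |a + b| ^ p ≤ 2 ^ p * (|a| ^ p + |b| ^ p) := by
  have h0 : (0:ℝ) ≤ p := by linarith
  have h1 : |a + b| ≤ 2 * max |a| |b| := by
    refine (abs_add_le a b).trans ?_
    rw [two_mul]
    exact add_le_add (le_max_left _ _) (le_max_right _ _)
  have h2 : |a + b| ^ p ≤ (2 * max |a| |b|) ^ p :=
    Real.rpow_le_rpow (abs_nonneg _) h1 h0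
  have h3 : (2 * max |a| |b|) ^ p = 2 ^ p * (max |a| |b|) ^ p :=
    Real.mul_rpow (by norm_num) ((abs_nonneg a).trans (le_max_left _ _))
  have h4 : (max |a| |b|) ^ p ≤ |a| ^ p + |b| ^ p := by
    rcases max_cases |a| |b| with ⟨h, _⟩ | ⟨h, _⟩ <;> rw [h]
    · exact le_add_of_nonneg_right (Real.rpow_nonneg (abs_nonneg _) _)
    · exact le_add_of_nonneg_left (Real.rpow_nonneg (abs_nonneg _) _)
  calc |a + b| ^ p ≤ 2 ^ p * (max |a| |b|) ^ p := by rw [← h3]; exact h2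
    _ ≤ 2 ^ p * (|a| ^ p + |b| ^ p) :=
        mul_le_mul_of_nonneg_left h4 (Real.rpow_nonneg (by norm_num) _)

variable {E : Type*} [NormedAddCommGroup E] [NormedSpace ℝ E]
  [MeasurableSpace E] [BorelSpace E] [FiniteDimensional ℝ E]
  (μ : Measure E) [μ.IsAddHaarMeasure] [SigmaFinite μ]
  {p q : ℝ}

noncomputable def G (μ : Measure E) (p : ℝ) (f : E → ℝ) (h : E) : ℝ≥0∞ :=
  ∫⁻ x, ENNReal.ofReal (|f (x + h) - f x| ^ p) ∂μ

lemma measurable_inner (hp : 0 ≤ p) {f : E → ℝ} (hf : Measurable f) :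
    Measurable (fun z : E × E => ENNReal.ofReal (|f (z.1 + z.2) - f z.1| ^ p)) := by
  apply ENNReal.measurable_ofReal.comp
  exact (Real.continuous_rpow_const hp).measurable.comp
    ((hf.comp (measurable_fst.add measurable_snd)).sub (hf.comp measurable_fst)).abs

lemma measurable_G (hp : 0 ≤ p) {f : E → ℝ} (hf : Measurable f) :
    Measurable (G μ p f) := by
  show Measurable fun (h : E) => ∫⁻ x, ENNReal.ofReal (|f (x + h) - f x| ^ p) ∂μ
  exact Measurable.lintegral_prod_right' ((measurable_inner hp hf).comp measurable_swap)

lemma lint_shift (g : E → ℝ≥0∞) (hg : Measurable g) (a : E) :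
    ∫⁻ x, g (x + a) ∂μ = ∫⁻ x, g x ∂μ :=
  (measurePreserving_add_right μ a).lintegral_comp hg

lemma G_subadd (hp : 1 ≤ p) {f : E → ℝ} (hf : Measurable f) (a b : E) :
    G μ p f (a + b) ≤ ENNReal.ofReal (2 ^ p) * (G μ p f a + G μ p f b) := by
  have hp0 : (0:ℝ) ≤ p := by linarith
  have key : ∀ x, ENNReal.ofReal (|f (x + (a + b)) - f x| ^ p) ≤
      ENNReal.ofReal (2 ^ p) *
        (ENNReal.ofReal (|f (x + a + b) - f (x + a)| ^ p)
          + ENNReal.ofReal (|f (x + a) - f x| ^ p)) := by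
    intro x
    rw [← ENNReal.ofReal_add (Real.rpow_nonneg (abs_nonneg _) _)
      (Real.rpow_nonneg (abs_nonneg _) _),
      ← ENNReal.ofReal_mul (Real.rpow_nonneg (by norm_num) _)]
    apply ENNReal.ofReal_le_ofReal
    have e : f (x + (a + b)) - f x = (f (x + a + b) - f (x + a)) + (f (x + a) - f x) := by
      rw [← add_assoc]; ring
    rw [e]
    exact rpow_add_le hp _ _
  have mψ : Measurable fun y : E => ENNReal.ofReal (|f (y + b) - f y| ^ p) := by
    have : Measurable fun y : E => (y, b) := measurable_id.prodMk measurable_const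
    have h2 := (measurable_inner hp0 hf).comp this
    simpa [Function.comp_def] using h2
  have m1 : Measurable fun x : E => ENNReal.ofReal (|f (x + a + b) - f (x + a)| ^ p) :=
    mψ.comp (measurable_add_const a)
  have e1 : (∫⁻ x, ENNReal.ofReal (|f (x + a + b) - f (x + a)| ^ p) ∂μ) = G μ p f b :=
    lint_shift μ (fun y => ENNReal.ofReal (|f (y + b) - f y| ^ p)) mψ a
  calc G μ p f (a + b) ≤ ∫⁻ x, ENNReal.ofReal (2 ^ p) *
        (ENNReal.ofReal (|f (x + a + b) - f (x + a)| ^ p)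
          + ENNReal.ofReal (|f (x + a) - f x| ^ p)) ∂μ := lintegral_mono key
    _ = ENNReal.ofReal (2 ^ p) * (∫⁻ x, (ENNReal.ofReal (|f (x + a + b) - f (x + a)| ^ p)
          + ENNReal.ofReal (|f (x + a) - f x| ^ p)) ∂μ) :=
        lintegral_const_mul' _ _ ENNReal.ofReal_ne_top
    _ = ENNReal.ofReal (2 ^ p) * (G μ p f a + G μ p f b) := by
        rw [lintegral_add_left m1, e1, add_comm]; rfl


lemma G_iter (hp : 1 ≤ p) {f : E → ℝ} (hf : Measurable f) (k : E) :
    ∀ n : ℕ, G μ p f ((n + 1) • k) ≤ (ENNReal.ofReal (2 ^ p)) ^ (2 * (n + 1)) * G μ p f k := by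
  have hp0 : (0:ℝ) ≤ p := by linarith
  set c : ℝ≥0∞ := ENNReal.ofReal (2 ^ p) with hc
  have h1c : 1 ≤ c := by
    rw [hc, ← ENNReal.ofReal_one]
    apply ENNReal.ofReal_le_ofReal
    calc (1:ℝ) = 2 ^ (0:ℝ) := (Real.rpow_zero 2).symm
      _ ≤ 2 ^ p := Real.rpow_le_rpow_of_exponent_le (by norm_num) hp0
  have h2c : 2 ≤ c := by
    rw [hc, ← ENNReal.ofReal_ofNat 2]
    apply ENNReal.ofReal_le_ofReal
    calc (2:ℝ) = 2 ^ (1:ℝ) := (Real.rpow_one 2).symm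
      _ ≤ 2 ^ p := Real.rpow_le_rpow_of_exponent_le (by norm_num) hp
  have hpow : ∀ m : ℕ, (1:ℝ≥0∞) ≤ c ^ m := fun m => one_le_pow_of_one_le' h1c m
  intro n
  induction n with
  | zero =>
    rw [zero_add, one_smul]
    calc G μ p f k = 1 * G μ p f k := (one_mul _).symm
      _ ≤ c ^ (2 * (0 + 1)) * G μ p f k := mul_le_mul_left (hpow _) _
  | succ n ih =>
    calc G μ p f ((n + 1 + 1) • k) = G μ p f ((n + 1) • k + k) := by rw [succ_nsmul]
      _ ≤ c * (G μ p f ((n + 1) • k) + G μ p f k) := G_subadd μ hp hf _ _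
      _ ≤ c * (c ^ (2 * (n + 1)) * G μ p f k + G μ p f k) := by gcongr
      _ = c * ((c ^ (2 * (n + 1)) + 1) * G μ p f k) := by rw [add_mul, one_mul]
      _ ≤ c * ((c ^ (2 * (n + 1)) + c ^ (2 * (n + 1))) * G μ p f k) := by
          gcongr; exact hpow _
      _ = c * (2 * (c ^ (2 * (n + 1)) * G μ p f k)) := by ring
      _ ≤ c * (c * (c ^ (2 * (n + 1)) * G μ p f k)) := by gcongr
      _ = c ^ (2 * (n + 1 + 1)) * G μ p f k := by
          rw [show 2 * (n + 1 + 1) = 1 + 1 + 2 * (n + 1) by ring, pow_add, pow_add, pow_one]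
          ring


lemma G_chain (hp : 1 ≤ p) {f : E → ℝ} (hf : Measurable f) {K : ℕ} (hK : 1 ≤ K) (h : E) :
    G μ p f h ≤ (ENNReal.ofReal (2 ^ p)) ^ (2 * K) * G μ p f ((K : ℝ)⁻¹ • h) := by
  obtain ⟨n, rfl⟩ : ∃ n, K = n + 1 := ⟨K - 1, (Nat.succ_pred_eq_of_pos hK).symm⟩
  have hK0 : ((n + 1 : ℕ) : ℝ) ≠ 0 := by positivity
  have e : ((n + 1 : ℕ)) • (((n + 1 : ℕ) : ℝ)⁻¹ • h) = h := by
    rw [← Nat.cast_smul_eq_nsmul ℝ, smul_smul, mul_inv_cancel₀ hK0, one_smul]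
  conv_lhs => rw [← e]
  exact G_iter μ hp hf _ n

lemma lint_scale (g : E → ℝ≥0∞) (hg : Measurable g) {c : ℝ} (hc : c ≠ 0) :
    ∫⁻ x, g (c • x) ∂μ
      = ENNReal.ofReal |(c ^ Module.finrank ℝ E)⁻¹| * ∫⁻ x, g x ∂μ := by
  rw [← lintegral_map hg (measurable_const_smul c), Measure.map_addHaar_smul μ hc,
    lintegral_smul_measure, smul_eq_mul]

noncomputable def A (μ : Measure E) (p q : ℝ) (ρ : ℝ) (f : E → ℝ) : ℝ≥0∞ :=
  ∫⁻ x, ∫⁻ h in ball (0 : E) ρ,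
    ENNReal.ofReal (|f (x + h) - f x| ^ p / ‖h‖ ^ q) ∂μ ∂μ

lemma A_mono (p q : ℝ) (f : E → ℝ) {ρ₁ ρ₂ : ℝ} (hρ : ρ₁ ≤ ρ₂) :
    A μ p q ρ₁ f ≤ A μ p q ρ₂ f :=
  lintegral_mono fun _ => lintegral_mono_set (ball_subset_ball hρ)

lemma measurable_F (hp : 0 ≤ p) (hq : 0 ≤ q) {f : E → ℝ} (hf : Measurable f) :
    Measurable (fun z : E × E =>
      ENNReal.ofReal (|f (z.1 + z.2) - f z.1| ^ p / ‖z.2‖ ^ q)) := by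
  apply ENNReal.measurable_ofReal.comp
  apply Measurable.div
  · exact (Real.continuous_rpow_const hp).measurable.comp
      ((hf.comp (measurable_fst.add measurable_snd)).sub (hf.comp measurable_fst)).abs
  · exact (Real.continuous_rpow_const hq).measurable.comp measurable_snd.norm

lemma A_eq [Nontrivial E] (hp : 0 ≤ p) (hq : 0 < q) {f : E → ℝ} (hf : Measurable f)
    (ρ : ℝ) :
    A μ p q ρ f = ∫⁻ h in ball (0 : E) ρ,
      G μ p f h * (ENNReal.ofReal (‖h‖ ^ q))⁻¹ ∂μ := by
  set F : E × E → ℝ≥0∞ := fun z =>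
    ENNReal.ofReal (|f (z.1 + z.2) - f z.1| ^ p / ‖z.2‖ ^ q) with hF
  have hFm : Measurable F := measurable_F hp hq.le hf
  have hIm : Measurable fun z : E × E =>
      (ball (0 : E) ρ).indicator (fun h => F (z.1, h)) z.2 := by
    have : (fun z : E × E => (ball (0 : E) ρ).indicator (fun h => F (z.1, h)) z.2)
        = (Set.univ ×ˢ ball (0 : E) ρ).indicator F := by
      ext z
      by_cases hz : z.2 ∈ ball (0 : E) ρ <;>
        simp [Set.indicator_apply, hz, Set.mem_prod]
    rw [this]
    exact hFm.indicator (MeasurableSet.univ.prod measurableSet_ball)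
  have step1 : A μ p q ρ f
      = ∫⁻ x, ∫⁻ h, (ball (0 : E) ρ).indicator (fun h => F (x, h)) h ∂μ ∂μ := by
    unfold A
    congr 1; ext x
    rw [lintegral_indicator measurableSet_ball]
  have step2 : (∫⁻ x, ∫⁻ h, (ball (0 : E) ρ).indicator (fun h => F (x, h)) h ∂μ ∂μ)
      = ∫⁻ h, ∫⁻ x, (ball (0 : E) ρ).indicator (fun h => F (x, h)) h ∂μ ∂μ :=
    lintegral_lintegral_swap hIm.aemeasurable
  have step3 : (∫⁻ h, ∫⁻ x, (ball (0 : E) ρ).indicator (fun h => F (x, h)) h ∂μ ∂μ)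
      = ∫⁻ h in ball (0 : E) ρ, ∫⁻ x, F (x, h) ∂μ ∂μ := by
    rw [← lintegral_indicator measurableSet_ball]
    congr 1; ext h
    by_cases hb : h ∈ ball (0 : E) ρ <;> simp [Set.indicator_apply, hb]
  have step4 : (∫⁻ h in ball (0 : E) ρ, ∫⁻ x, F (x, h) ∂μ ∂μ)
      = ∫⁻ h in ball (0 : E) ρ, G μ p f h * (ENNReal.ofReal (‖h‖ ^ q))⁻¹ ∂μ := by
    have hae : ∀ᵐ h ∂μ, h ≠ (0 : E) := by
      rw [ae_iff]
      simpa using measure_singleton (0 : E)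
    apply lintegral_congr_ae
    apply ae_restrict_of_ae
    filter_upwards [hae] with h hne
    have hnorm : 0 < ‖h‖ ^ q := Real.rpow_pos_of_pos (norm_pos_iff.mpr hne) q
    have e1 : ∀ x, F (x, h)
        = ENNReal.ofReal (|f (x + h) - f x| ^ p) * (ENNReal.ofReal (‖h‖ ^ q))⁻¹ := by
      intro x
      rw [hF]
      simp only
      rw [ENNReal.ofReal_div_of_pos hnorm, div_eq_mul_inv]
    simp only [e1]
    exact lintegral_mul_const' _ _
      (ENNReal.inv_ne_top.mpr (ENNReal.ofReal_pos.mpr hnorm).ne')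
  rw [step1, step2, step3, step4]


lemma key [Nontrivial E] (hp : 1 ≤ p) (hq : 0 < q) {r R : ℝ} (hr : 0 < r) (hrR : r ≤ R) :
    ∃ C : ℝ, 1 ≤ C ∧ ∀ f : E → ℝ, Measurable f →
      A μ p q R f ≤ ENNReal.ofReal C * A μ p q r f := by
  have hp0 : (0:ℝ) ≤ p := by linarith
  set n := Module.finrank ℝ E with hn
  set K : ℕ := ⌈2 * R / r⌉₊ + 1 with hKdef
  have hK1 : 1 ≤ K := Nat.le_add_left _ _
  have hKpos : (0:ℝ) < K := by positivity
  have hKgt : 2 * R / r < K := by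
    calc 2 * R / r ≤ (⌈2 * R / r⌉₊ : ℝ) := Nat.le_ceil _
      _ < K := by exact_mod_cast Nat.lt_succ_self _
  have hRK : R / K < r / 2 := by
    rw [div_lt_div_iff₀ hKpos (by norm_num)]
    have := (div_lt_iff₀ hr).mp hKgt
    nlinarith
  set t : ℝ := (K:ℝ) ^ n * (2 ^ p) ^ (2 * K) * ((r / 2) ^ q * (r ^ q)⁻¹) with ht
  have ht0 : 0 ≤ t := by positivity
  refine ⟨1 + t, by linarith, ?_⟩
  intro f hf
  set c : ℝ≥0∞ := ENNReal.ofReal (2 ^ p) with hc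
  set W : E → ℝ≥0∞ := fun h => G μ p f h * (ENNReal.ofReal (‖h‖ ^ q))⁻¹ with hW
  set X := A μ p q r f with hX
  set Ann : Set E := ball (0 : E) R \ ball (0 : E) r with hAnn
  have hball : ball (0:E) R = ball (0:E) r ∪ Ann :=
    (Set.union_diff_cancel (ball_subset_ball hrR)).symm
  have hsplit : A μ p q R f = X + ∫⁻ h in Ann, W h ∂μ := by
    rw [A_eq μ hp0 hq hf R, hX, A_eq μ hp0 hq hf r, hball,
      lintegral_union (measurableSet_ball.diff measurableSet_ball) disjoint_sdiff_right]
  have hrq : (0:ℝ) < r ^ q := Real.rpow_pos_of_pos hr q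
  -- bound the annulus term
  have est1 : (∫⁻ h in Ann, W h ∂μ)
      ≤ (∫⁻ h in Ann, G μ p f h ∂μ) * (ENNReal.ofReal (r ^ q))⁻¹ := by
    rw [← lintegral_mul_const' _ _ (ENNReal.inv_ne_top.mpr (ENNReal.ofReal_pos.mpr hrq).ne')]
    apply setLIntegral_mono' (measurableSet_ball.diff measurableSet_ball)
    intro h hh
    apply mul_le_mul_right
    apply ENNReal.inv_le_inv'
    apply ENNReal.ofReal_le_ofReal
    have : r ≤ ‖h‖ := by
      have := hh.2
      rw [mem_ball_zero_iff] at this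
      linarith [not_lt.mp this]
    exact Real.rpow_le_rpow hr.le this hq.le
  have est2 : (∫⁻ h in Ann, G μ p f h ∂μ)
      ≤ c ^ (2 * K) * ∫⁻ h in ball (0:E) R, G μ p f ((K:ℝ)⁻¹ • h) ∂μ := by
    calc (∫⁻ h in Ann, G μ p f h ∂μ)
        ≤ ∫⁻ h in Ann, c ^ (2 * K) * G μ p f ((K:ℝ)⁻¹ • h) ∂μ :=
          lintegral_mono fun h => G_chain μ hp hf hK1 h
      _ = c ^ (2 * K) * ∫⁻ h in Ann, G μ p f ((K:ℝ)⁻¹ • h) ∂μ :=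
          lintegral_const_mul' _ _ (ENNReal.pow_ne_top ENNReal.ofReal_ne_top)
      _ ≤ c ^ (2 * K) * ∫⁻ h in ball (0:E) R, G μ p f ((K:ℝ)⁻¹ • h) ∂μ :=
          mul_le_mul_right (lintegral_mono_set Set.diff_subset) _
  have hKinv : ((K:ℝ))⁻¹ ≠ 0 := by positivity
  have hGm : Measurable (G μ p f) := measurable_G μ hp0 hf
  have hmem : ∀ h : E, ((K:ℝ)⁻¹ • h ∈ ball (0:E) (R / K)) ↔ h ∈ ball (0:E) R := by
    intro h
    rw [mem_ball_zero_iff, mem_ball_zero_iff, norm_smul, Real.norm_eq_abs, abs_inv,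
      Nat.abs_cast, div_eq_mul_inv, mul_comm ((K:ℝ))⁻¹]
    exact mul_lt_mul_iff_of_pos_right (inv_pos.mpr hKpos)
  have est3 : (∫⁻ h in ball (0:E) R, G μ p f ((K:ℝ)⁻¹ • h) ∂μ)
      = ENNReal.ofReal ((K:ℝ) ^ n) * ∫⁻ h in ball (0:E) (R / K), G μ p f h ∂μ := by
    set g : E → ℝ≥0∞ := (ball (0:E) (R / K)).indicator (G μ p f) with hg
    have hgm : Measurable g := hGm.indicator measurableSet_ball
    have e1 : (∫⁻ h in ball (0:E) R, G μ p f ((K:ℝ)⁻¹ • h) ∂μ)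
        = ∫⁻ h, g ((K:ℝ)⁻¹ • h) ∂μ := by
      rw [← lintegral_indicator measurableSet_ball]
      apply lintegral_congr
      intro h
      by_cases hb : h ∈ ball (0:E) R
      · rw [Set.indicator_of_mem hb, hg, Set.indicator_of_mem ((hmem h).mpr hb)]
      · rw [Set.indicator_of_notMem hb, hg,
          Set.indicator_of_notMem (fun hmem' => hb ((hmem h).mp hmem'))]
    rw [e1, lint_scale μ g hgm hKinv, hg, lintegral_indicator measurableSet_ball]
    congr 2
    rw [inv_pow, inv_inv, ← hn, abs_of_nonneg (by positivity)]
  have est5 : (∫⁻ h in ball (0:E) (R / K), G μ p f h ∂μ)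
      ≤ ENNReal.ofReal ((r / 2) ^ q) * X := by
    have hsub : (∫⁻ h in ball (0:E) (R / K), G μ p f h ∂μ)
        ≤ ∫⁻ h in ball (0:E) (r / 2), G μ p f h ∂μ :=
      lintegral_mono_set (ball_subset_ball hRK.le)
    have hae : ∀ᵐ h ∂μ, h ≠ (0 : E) := by
      rw [ae_iff]; simpa using measure_singleton (0 : E)
    have hptwise : ∀ᵐ h ∂(μ.restrict (ball (0:E) (r / 2))),
        G μ p f h ≤ W h * ENNReal.ofReal ((r / 2) ^ q) := by
      filter_upwards [ae_restrict_mem measurableSet_ball, ae_restrict_of_ae hae]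
        with h hb hne
      have hnorm : 0 < ‖h‖ ^ q := Real.rpow_pos_of_pos (norm_pos_iff.mpr hne) q
      have h1 : ENNReal.ofReal (‖h‖ ^ q) ≠ 0 := (ENNReal.ofReal_pos.mpr hnorm).ne'
      calc G μ p f h
          = G μ p f h * ((ENNReal.ofReal (‖h‖ ^ q))⁻¹ * ENNReal.ofReal (‖h‖ ^ q)) := by
            rw [ENNReal.inv_mul_cancel h1 ENNReal.ofReal_ne_top, mul_one]
        _ = W h * ENNReal.ofReal (‖h‖ ^ q) := (mul_assoc _ _ _).symm
        _ ≤ W h * ENNReal.ofReal ((r / 2) ^ q) := by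
            apply mul_le_mul_right
            apply ENNReal.ofReal_le_ofReal
            apply Real.rpow_le_rpow (norm_nonneg _) _ hq.le
            rw [mem_ball_zero_iff] at hb
            linarith
    calc (∫⁻ h in ball (0:E) (R / K), G μ p f h ∂μ)
        ≤ ∫⁻ h in ball (0:E) (r / 2), G μ p f h ∂μ := hsub
      _ ≤ ∫⁻ h in ball (0:E) (r / 2), W h * ENNReal.ofReal ((r / 2) ^ q) ∂μ :=
          lintegral_mono_ae hptwise
      _ = (∫⁻ h in ball (0:E) (r / 2), W h ∂μ) * ENNReal.ofReal ((r / 2) ^ q) :=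
          lintegral_mul_const' _ _ ENNReal.ofReal_ne_top
      _ ≤ (∫⁻ h in ball (0:E) r, W h ∂μ) * ENNReal.ofReal ((r / 2) ^ q) :=
          mul_le_mul_left (lintegral_mono_set (ball_subset_ball (by linarith))) _
      _ = ENNReal.ofReal ((r / 2) ^ q) * X := by
          rw [hX, A_eq μ hp0 hq hf r, mul_comm]
  -- combine
  have hannulus : (∫⁻ h in Ann, W h ∂μ) ≤ ENNReal.ofReal t * X := by
    calc (∫⁻ h in Ann, W h ∂μ)
        ≤ (∫⁻ h in Ann, G μ p f h ∂μ) * (ENNReal.ofReal (r ^ q))⁻¹ := est1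
      _ ≤ (c ^ (2 * K) * (ENNReal.ofReal ((K:ℝ) ^ n) *
            (ENNReal.ofReal ((r / 2) ^ q) * X))) * (ENNReal.ofReal (r ^ q))⁻¹ := by
          apply mul_le_mul_left
          calc (∫⁻ h in Ann, G μ p f h ∂μ)
              ≤ c ^ (2 * K) * ∫⁻ h in ball (0:E) R, G μ p f ((K:ℝ)⁻¹ • h) ∂μ := est2
            _ = c ^ (2 * K) * (ENNReal.ofReal ((K:ℝ) ^ n) *
                  ∫⁻ h in ball (0:E) (R / K), G μ p f h ∂μ) := by rw [est3]
            _ ≤ c ^ (2 * K) * (ENNReal.ofReal ((K:ℝ) ^ n) *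
                  (ENNReal.ofReal ((r / 2) ^ q) * X)) := by gcongr
      _ = ENNReal.ofReal t * X := by
          rw [hc, ← ENNReal.ofReal_pow (by positivity),
            ← ENNReal.ofReal_inv_of_pos hrq,
            ht]
          rw [show ENNReal.ofReal ((2 ^ p) ^ (2 * K)) * (ENNReal.ofReal ((K:ℝ) ^ n) *
              (ENNReal.ofReal ((r / 2) ^ q) * X)) * ENNReal.ofReal ((r ^ q)⁻¹)
            = (ENNReal.ofReal ((2 ^ p) ^ (2 * K)) * ENNReal.ofReal ((K:ℝ) ^ n) *
              ENNReal.ofReal ((r / 2) ^ q) * ENNReal.ofReal ((r ^ q)⁻¹)) * X by ring]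
          congr 1
          rw [← ENNReal.ofReal_mul (by positivity), ← ENNReal.ofReal_mul (by positivity),
            ← ENNReal.ofReal_mul (by positivity)]
          congr 1
          ring
  calc A μ p q R f = X + ∫⁻ h in Ann, W h ∂μ := hsplit
    _ ≤ X + ENNReal.ofReal t * X := add_le_add_right hannulus _
    _ = (1 + ENNReal.ofReal t) * X := by rw [add_mul, one_mul]
    _ = ENNReal.ofReal (1 + t) * X := by
        rw [ENNReal.ofReal_add (by norm_num) ht0, ENNReal.ofReal_one]


noncomputable def T (μ : Measure E) (p q : ℝ) (σ : E → ℝ≥0∞) (f : E → ℝ) : ℝ≥0∞ :=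
  ∫⁻ x, ∫⁻ h in {h : E | (‖h‖₊ : ℝ≥0∞) < σ x},
    ENNReal.ofReal (|f (x + h) - f x| ^ p / ‖h‖ ^ q) ∂μ ∂μ

lemma T_le_A {σ : E → ℝ≥0∞} {M : ℝ} (hM : ∀ x, σ x ≤ ENNReal.ofReal M)
    (f : E → ℝ) : T μ p q σ f ≤ A μ p q M f := by
  apply lintegral_mono
  intro x
  apply lintegral_mono_set
  intro h hh
  rw [Set.mem_setOf_eq, ← enorm_eq_nnnorm, ← ofReal_norm] at hh
  rw [mem_ball_zero_iff]
  exact (ENNReal.ofReal_lt_ofReal_iff_of_nonneg (norm_nonneg h)).mp (lt_of_lt_of_le hh (hM x))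

lemma A_le_T {σ : E → ℝ≥0∞} {m : ℝ} (hm0 : 0 < m) (hm : ∀ x, ENNReal.ofReal m ≤ σ x)
    (f : E → ℝ) : A μ p q m f ≤ T μ p q σ f := by
  apply lintegral_mono
  intro x
  apply lintegral_mono_set
  intro h hh
  rw [mem_ball_zero_iff] at hh
  rw [Set.mem_setOf_eq, ← enorm_eq_nnnorm, ← ofReal_norm]
  exact lt_of_lt_of_le ((ENNReal.ofReal_lt_ofReal_iff hm0).mpr hh) (hm x)

lemma T_congr (σ : E → ℝ≥0∞) {f g : E → ℝ} (hfg : f =ᵐ[μ] g) :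
    T μ p q σ f = T μ p q σ g := by
  apply lintegral_congr_ae
  set t := toMeasurable μ {y | f y ≠ g y} with htdef
  have htm : MeasurableSet t := measurableSet_toMeasurable _ _
  have ht0 : μ t = 0 := by
    rw [htdef, measure_toMeasurable]
    exact ae_iff.mp hfg
  have hsub : {y | f y ≠ g y} ⊆ t := subset_toMeasurable _ _
  have hx : ∀ x : E, ∀ᵐ h ∂μ, f (x + h) = g (x + h) := by
    intro x
    have hpre : μ ((fun h => x + h) ⁻¹' t) = 0 := by
      rw [(measurePreserving_add_left μ x).measure_preimage htm.nullMeasurableSet]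
      exact ht0
    rw [ae_iff]
    refine measure_mono_null (fun h hh => ?_) hpre
    exact hsub hh
  filter_upwards [hfg] with x hx0
  apply lintegral_congr_ae
  apply ae_restrict_of_ae
  filter_upwards [hx x] with h hh
  rw [hh, hx0]

end St13

/-- The screened homogeneous fractional Sobolev seminorm on all of `ℝ^N`:
`|f|_{W̃^{s,p}_{(σ)}(ℝ^N)} = (∫_{ℝ^N} ∫_{B(0,σ(x))} |f(x+h)-f(x)|^p / |h|^{sp+N} dh dx)^{1/p}`,
valued in `ℝ≥0∞`. -/
noncomputable def screenedSeminormR (N : ℕ) (s p : ℝ)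
    (σ : EuclideanSpace ℝ (Fin N) → ℝ≥0∞)
    (f : EuclideanSpace ℝ (Fin N) → ℝ) : ℝ≥0∞ :=
  (∫⁻ x, ∫⁻ h in {h : EuclideanSpace ℝ (Fin N) | (‖h‖₊ : ℝ≥0∞) < σ x},
      ENNReal.ofReal (|f (x + h) - f x| ^ p / ‖h‖ ^ (s * p + N))) ^ (1 / p)

/-- Let `σ₁, σ₂ : ℝ^N → (0,∞]` be screening functions bounded above
and below by positive finite constants.  Then for every `0 < s < 1` and `1 ≤ p < ∞`
there exist constants `c₀, c₁ > 0` such that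
`c₀ |f|_{W̃^{s,p}_{(σ₂)}} ≤ |f|_{W̃^{s,p}_{(σ₁)}} ≤ c₁ |f|_{W̃^{s,p}_{(σ₂)}}` for all
`f ∈ L¹_loc(ℝ^N)`; in particular the two screened spaces coincide. -/
theorem statement13 (N : ℕ) (σ₁ σ₂ : EuclideanSpace ℝ (Fin N) → ℝ≥0∞)
    (hσ₁lsc : LowerSemicontinuous σ₁) (hσ₂lsc : LowerSemicontinuous σ₂)
    (hσ₁bd : ∃ m M : ℝ, 0 < m ∧
      ∀ x, ENNReal.ofReal m ≤ σ₁ x ∧ σ₁ x ≤ ENNReal.ofReal M)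
    (hσ₂bd : ∃ m M : ℝ, 0 < m ∧
      ∀ x, ENNReal.ofReal m ≤ σ₂ x ∧ σ₂ x ≤ ENNReal.ofReal M)
    (s p : ℝ) (hs0 : 0 < s) (hs1 : s < 1) (hp : 1 ≤ p) :
    ∃ c₀ c₁ : ℝ, 0 < c₀ ∧ 0 < c₁ ∧
      ∀ f : EuclideanSpace ℝ (Fin N) → ℝ, LocallyIntegrable f →
        (ENNReal.ofReal c₀ * screenedSeminormR N s p σ₂ f
            ≤ screenedSeminormR N s p σ₁ f ∧
         screenedSeminormR N s p σ₁ f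
            ≤ ENNReal.ofReal c₁ * screenedSeminormR N s p σ₂ f ∧
         (screenedSeminormR N s p σ₁ f < ⊤ ↔ screenedSeminormR N s p σ₂ f < ⊤)) := by
  have hp0 : (0:ℝ) < p := lt_of_lt_of_le one_pos hp
  obtain ⟨m₁, M₁, hm₁, hbd₁⟩ := hσ₁bd
  obtain ⟨m₂, M₂, hm₂, hbd₂⟩ := hσ₂bd
  rcases Nat.eq_zero_or_pos N with hN | hN
  · -- trivial case `N = 0`: the space is a single point and all seminorms vanish
    subst hN
    haveI : Subsingleton (EuclideanSpace ℝ (Fin 0)) :=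
      ⟨fun a b => by ext i; exact i.elim0⟩
    have hzero : ∀ (σ : EuclideanSpace ℝ (Fin 0) → ℝ≥0∞)
        (f : EuclideanSpace ℝ (Fin 0) → ℝ), screenedSeminormR 0 s p σ f = 0 := by
      intro σ f
      unfold screenedSeminormR
      have hinner : ∀ x h : EuclideanSpace ℝ (Fin 0),
          ENNReal.ofReal (|f (x + h) - f x| ^ p / ‖h‖ ^ (s * p + (0:ℕ))) = 0 := by
        intro x h
        have hxh : x + h = x := Subsingleton.elim _ _
        rw [hxh, sub_self, abs_zero, Real.zero_rpow (ne_of_gt hp0), zero_div,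
          ENNReal.ofReal_zero]
      simp only [hinner, lintegral_zero]
      exact ENNReal.zero_rpow_of_pos (by positivity)
    exact ⟨1, 1, one_pos, one_pos, fun f _ => by
      rw [hzero σ₁ f, hzero σ₂ f]
      simp⟩
  · -- main case `N ≥ 1`
    haveI : Nonempty (Fin N) := ⟨⟨0, hN⟩⟩
    haveI : Nontrivial (EuclideanSpace ℝ (Fin N)) := inferInstance
    set q : ℝ := s * p + N with hqdef
    have hq : 0 < q := by
      have h1 : (0:ℝ) ≤ (N:ℝ) := Nat.cast_nonneg N
      have h2 : 0 < s * p := mul_pos hs0 hp0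
      rw [hqdef]; linarith
    have hM₁pos : 0 < M₁ := by
      by_contra hcon
      have h1 := le_trans (hbd₁ 0).1 (hbd₁ 0).2
      rw [ENNReal.ofReal_eq_zero.mpr (le_of_not_gt hcon)] at h1
      exact absurd (le_antisymm h1 zero_le) (ENNReal.ofReal_pos.mpr hm₁).ne'
    have hM₂pos : 0 < M₂ := by
      by_contra hcon
      have h1 := le_trans (hbd₂ 0).1 (hbd₂ 0).2
      rw [ENNReal.ofReal_eq_zero.mpr (le_of_not_gt hcon)] at h1
      exact absurd (le_antisymm h1 zero_le) (ENNReal.ofReal_pos.mpr hm₂).ne'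
    obtain ⟨C₁, hC₁, hkey₁⟩ := St13.key (volume : Measure (EuclideanSpace ℝ (Fin N)))
      hp hq hm₂ (le_max_right M₁ m₂)
    obtain ⟨C₂, hC₂, hkey₂⟩ := St13.key (volume : Measure (EuclideanSpace ℝ (Fin N)))
      hp hq hm₁ (le_max_right M₂ m₁)
    have hC₁0 : 0 < C₁ := by linarith
    have hC₂0 : 0 < C₂ := by linarith
    refine ⟨(C₂ ^ (1/p))⁻¹, C₁ ^ (1/p), by positivity, by positivity, ?_⟩
    intro f hf
    have hfm := hf.aestronglyMeasurable
    set g : EuclideanSpace ℝ (Fin N) → ℝ := hfm.mk f with hg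
    have hgm : Measurable g := hfm.stronglyMeasurable_mk.measurable
    have hfg : f =ᵐ[volume] g := hfm.ae_eq_mk
    have hrepr : ∀ σ : EuclideanSpace ℝ (Fin N) → ℝ≥0∞,
        screenedSeminormR N s p σ f = (St13.T volume p q σ g) ^ (1/p) := by
      intro σ
      have e : screenedSeminormR N s p σ f = (St13.T volume p q σ f) ^ (1/p) := rfl
      rw [e, St13.T_congr volume σ hfg]
    have hT₁₂ : St13.T volume p q σ₁ g ≤ ENNReal.ofReal C₁ * St13.T volume p q σ₂ g := by
      calc St13.T volume p q σ₁ g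
          ≤ St13.A volume p q M₁ g := St13.T_le_A volume (fun x => (hbd₁ x).2) g
        _ ≤ St13.A volume p q (max M₁ m₂) g :=
            St13.A_mono volume p q g (le_max_left _ _)
        _ ≤ ENNReal.ofReal C₁ * St13.A volume p q m₂ g := hkey₁ g hgm
        _ ≤ ENNReal.ofReal C₁ * St13.T volume p q σ₂ g :=
            mul_le_mul_right (St13.A_le_T volume hm₂ (fun x => (hbd₂ x).1) g) _
    have hT₂₁ : St13.T volume p q σ₂ g ≤ ENNReal.ofReal C₂ * St13.T volume p q σ₁ g := by
      calc St13.T volume p q σ₂ g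
          ≤ St13.A volume p q M₂ g := St13.T_le_A volume (fun x => (hbd₂ x).2) g
        _ ≤ St13.A volume p q (max M₂ m₁) g :=
            St13.A_mono volume p q g (le_max_left _ _)
        _ ≤ ENNReal.ofReal C₂ * St13.A volume p q m₁ g := hkey₂ g hgm
        _ ≤ ENNReal.ofReal C₂ * St13.T volume p q σ₁ g :=
            mul_le_mul_right (St13.A_le_T volume hm₁ (fun x => (hbd₁ x).1) g) _
    have hpinv : (0:ℝ) ≤ 1/p := by positivity
    have hS₁ : screenedSeminormR N s p σ₁ f
        ≤ ENNReal.ofReal (C₁ ^ (1/p)) * screenedSeminormR N s p σ₂ f := by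
      rw [hrepr σ₁, hrepr σ₂, ← ENNReal.ofReal_rpow_of_pos hC₁0]
      calc (St13.T volume p q σ₁ g) ^ (1/p)
          ≤ (ENNReal.ofReal C₁ * St13.T volume p q σ₂ g) ^ (1/p) :=
            ENNReal.rpow_le_rpow hT₁₂ hpinv
        _ = (ENNReal.ofReal C₁) ^ (1/p) * (St13.T volume p q σ₂ g) ^ (1/p) :=
            ENNReal.mul_rpow_of_nonneg _ _ hpinv
    have hS₂ : screenedSeminormR N s p σ₂ f
        ≤ ENNReal.ofReal (C₂ ^ (1/p)) * screenedSeminormR N s p σ₁ f := by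
      rw [hrepr σ₁, hrepr σ₂, ← ENNReal.ofReal_rpow_of_pos hC₂0]
      calc (St13.T volume p q σ₂ g) ^ (1/p)
          ≤ (ENNReal.ofReal C₂ * St13.T volume p q σ₁ g) ^ (1/p) :=
            ENNReal.rpow_le_rpow hT₂₁ hpinv
        _ = (ENNReal.ofReal C₂) ^ (1/p) * (St13.T volume p q σ₁ g) ^ (1/p) :=
            ENNReal.mul_rpow_of_nonneg _ _ hpinv
    refine ⟨?_, hS₁, ?_, ?_⟩
    · calc ENNReal.ofReal (C₂ ^ (1/p))⁻¹ * screenedSeminormR N s p σ₂ f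
          ≤ ENNReal.ofReal (C₂ ^ (1/p))⁻¹ *
              (ENNReal.ofReal (C₂ ^ (1/p)) * screenedSeminormR N s p σ₁ f) :=
            mul_le_mul_right hS₂ _
        _ = (ENNReal.ofReal (C₂ ^ (1/p))⁻¹ * ENNReal.ofReal (C₂ ^ (1/p))) *
              screenedSeminormR N s p σ₁ f := (mul_assoc _ _ _).symm
        _ = screenedSeminormR N s p σ₁ f := by
            rw [← ENNReal.ofReal_mul (by positivity), inv_mul_cancel₀ (by positivity),
              ENNReal.ofReal_one, one_mul]
    · intro h1
      exact lt_of_le_of_lt hS₂ (ENNReal.mul_lt_top ENNReal.ofReal_lt_top h1)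
    · intro h2
      exact lt_of_le_of_lt hS₁ (ENNReal.mul_lt_top ENNReal.ofReal_lt_top h2)
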